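/- Let (αₙ), (βₙ) be nonnegative real sequences with a monotone rate of divergence r for ∑αᵢ = ∞, and suppose θ > 0 satisfies βₙ − β_{n+1} ≤ θαₙ for all n. If N ∈ ℕ, ε > 0 and g : ℕ → ℕ are such that ∑_{i=N}^{r(N+g(N), ε/(2θ))} αᵢβᵢ ≤ ε²/(4θ), then βₙ ≤ ε for all n ∈ [N, N+g(N)]. -/

import Mathlib

open Filter Finset

/-- Simplified quantitative lemma: if βₙ − β_{n+1} ≤ θαₙ for all n, r is a
monotone rate of divergence for ∑αᵢ = ∞, and
∑_{i=N}^{r(N+g(N),ε/2θ)} αᵢβᵢ ≤ ε²/(4θ), then βₙ ≤ ε on [N, N+g(N)]. -/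
theorem stmt7 (α β : ℕ → ℝ) (r : ℕ → ℝ → ℕ)
    (hα : ∀ n, 0 ≤ α n) (hβ : ∀ n, 0 ≤ β n)
    (hr : ∀ (n : ℕ) (x : ℝ), 0 < x → x ≤ ∑ i ∈ Finset.Icc n (r n x), α i)
    (hrmono : ∀ (m n : ℕ) (x : ℝ), m ≤ n → r m x ≤ r n x)
    (θ : ℝ) (hθ : 0 < θ)
    (hreg : ∀ n, β n - β (n + 1) ≤ θ * α n)
    (N : ℕ) (ε : ℝ) (hε : 0 < ε) (g : ℕ → ℕ)
    (hsum : ∑ i ∈ Finset.Icc N (r (N + g N) (ε / (2 * θ))), α i * β i ≤ ε ^ 2 / (4 * θ)) :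
    ∀ n : ℕ, N ≤ n → n ≤ N + g N → β n ≤ ε := by
  by_contra h
  push_neg at h
  obtain ⟨n, hNn, hnN, hβn⟩ := h
  classical
  set c := ε / (2 * θ) with hc_def
  have hc : 0 < c := by positivity
  have hθc : θ * c = ε / 2 := by
    rw [hc_def, mul_div_assoc', mul_comm 2 θ, ← div_div, mul_div_cancel_left₀ _ hθ.ne']
  have hex : ∃ m, c ≤ ∑ i ∈ Finset.Icc n m, α i := ⟨r n c, hr n c hc⟩
  set m := Nat.find hex with hm_def
  have hm : c ≤ ∑ i ∈ Finset.Icc n m, α i := Nat.find_spec hex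
  have hmR : m ≤ r n c := Nat.find_min' hex (hr n c hc)
  -- prefix sums below c
  have hpref : ∀ i, i ≤ m → ∑ j ∈ Finset.Ico n i, α j < c := by
    intro i hi
    rcases le_or_gt i n with h' | h'
    · rw [Finset.Ico_eq_empty (by omega)]
      simpa using hc
    · obtain ⟨j, rfl⟩ := Nat.exists_eq_succ_of_ne_zero (by omega : i ≠ 0)
      simp only [Nat.succ_eq_add_one, Finset.Ico_add_one_right_eq_Icc]
      have hjm : j < m := by omega
      have := Nat.find_min hex hjm
      push_neg at this
      exact this
  -- telescoping
  have htel : ∀ k, β n - β (n + k) ≤ θ * ∑ j ∈ Finset.Ico n (n + k), α j := by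
    intro k
    induction k with
    | zero => simp
    | succ k ih =>
      have h2 := hreg (n + k)
      rw [show n + (k + 1) = (n + k) + 1 from rfl,
        Finset.sum_Ico_succ_top (Nat.le_add_right n k), mul_add]
      linarith
  -- key lower bound on β on [n, m]
  have key : ∀ i ∈ Finset.Icc n m, ε / 2 < β i := by
    intro i hi
    simp only [Finset.mem_Icc] at hi
    obtain ⟨k, rfl⟩ := Nat.exists_eq_add_of_le hi.1
    have h1 := htel k
    have h2 := hpref (n + k) hi.2
    have h3 : θ * ∑ j ∈ Finset.Ico n (n + k), α j < θ * c :=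
      mul_lt_mul_of_pos_left h2 hθ
    rw [hθc] at h3
    linarith
  -- exists positive α in window
  have hpos : ∃ i ∈ Finset.Icc n m, 0 < α i := by
    by_contra hno
    push_neg at hno
    have hz : ∑ i ∈ Finset.Icc n m, α i = 0 :=
      Finset.sum_eq_zero fun i hi => le_antisymm (hno i hi) (hα i)
    rw [hz] at hm
    linarith
  obtain ⟨i₀, hi₀, hαi₀⟩ := hpos
  have h1 : ∑ i ∈ Finset.Icc n m, ε / 2 * α i < ∑ i ∈ Finset.Icc n m, α i * β i := by
    apply Finset.sum_lt_sum
    · intro i hi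
      have := key i hi
      nlinarith [hα i]
    · exact ⟨i₀, hi₀, by nlinarith [key i₀ hi₀]⟩
  have h2 : ε ^ 2 / (4 * θ) ≤ ∑ i ∈ Finset.Icc n m, ε / 2 * α i := by
    rw [← Finset.mul_sum]
    have : ε ^ 2 / (4 * θ) = ε / 2 * c := by
      rw [hc_def]; field_simp; ring
    rw [this]
    exact mul_le_mul_of_nonneg_left hm (by positivity)
  have h3 : ∑ i ∈ Finset.Icc n m, α i * β i
      ≤ ∑ i ∈ Finset.Icc N (r (N + g N) c), α i * β i := by
    apply Finset.sum_le_sum_of_subset_of_nonneg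
    · apply Finset.Icc_subset_Icc hNn
      exact le_trans hmR (hrmono n (N + g N) c hnN)
    · intro i _ _
      exact mul_nonneg (hα i) (hβ i)
  linarith
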